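/- For each j ≥ 1, the partial sums of Catalan triangle columns satisfy: f_j(1/4) = Σ_{l=j}^∞ C(l,j)/4^{l-1} = 1/2^{j-2}, equivalently (1/4)·f_j(1/4) = 1/2^j. In particular f_1(1/4) = 2 and f_2(1/4) = 1. -/

import Mathlib

open Finset Filter Topology Function

/-- Central binomial coefficient squared times `2n+1` is at most `16^n`. -/
lemma cb_sq_le (n : ℕ) : (Nat.centralBinom n)^2 * (2*n+1) ≤ 16^n := by
  induction n with
  | zero => simp [Nat.centralBinom]
  | succ n ih =>
    have h := Nat.succ_mul_centralBinom_succ n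
    have e : (n+1)^2 * Nat.centralBinom (n+1)^2
        = 4*(2*n+1)^2 * Nat.centralBinom n ^2 := by
      calc (n+1)^2 * Nat.centralBinom (n+1)^2
          = ((n+1) * Nat.centralBinom (n+1))^2 := by ring
        _ = (2*(2*n+1)*Nat.centralBinom n)^2 := by rw [h]
        _ = 4*(2*n+1)^2 * Nat.centralBinom n^2 := by ring
    have step : (n+1)^2 * (Nat.centralBinom (n+1)^2 * (2*(n+1)+1))
        ≤ (n+1)^2 * 16^(n+1) := by
      calc (n+1)^2 * (Nat.centralBinom (n+1)^2 * (2*(n+1)+1))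
          = ((n+1)^2 * Nat.centralBinom (n+1)^2) * (2*n+3) := by ring
        _ = (4*(2*n+1)^2 * Nat.centralBinom n^2) * (2*n+3) := by rw [e]
        _ = (4*(2*n+1)*(2*n+3)) * (Nat.centralBinom n^2 * (2*n+1)) := by ring
        _ ≤ (16*(n+1)^2) * (Nat.centralBinom n^2 * (2*n+1)) := by
            have : 4*(2*n+1)*(2*n+3) ≤ 16*(n+1)^2 := by nlinarith
            exact Nat.mul_le_mul_right _ this
        _ ≤ (16*(n+1)^2) * 16^n := Nat.mul_le_mul_left _ ih
        _ = (n+1)^2 * 16^(n+1) := by ring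
    exact Nat.le_of_mul_le_mul_left step (by positivity)

lemma cb_tendsto : Tendsto (fun n : ℕ => ((2*n).choose n : ℝ)/4^n) atTop (𝓝 0) := by
  have hub : ∀ n : ℕ, ((2*n).choose n : ℝ)/4^n ≤ Real.sqrt (1/(2*(n:ℝ)+1)) := by
    intro n
    have hcb := cb_sq_le n
    have h1 : (((2*n).choose n : ℝ)/4^n)^2 ≤ 1/(2*(n:ℝ)+1) := by
      rw [div_pow, div_le_div_iff₀ (by positivity) (by positivity), one_mul]
      have h16 : ((4:ℝ)^n)^2 = 16^n := by
        rw [← pow_mul, pow_mul']; norm_num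
      rw [h16]
      have : ((Nat.centralBinom n : ℝ))^2 * (2*(n:ℝ)+1) ≤ 16^n := by
        exact_mod_cast hcb
      simpa [Nat.centralBinom] using this
    have h2 : 0 ≤ ((2*n).choose n : ℝ)/4^n := by positivity
    calc ((2*n).choose n : ℝ)/4^n
        = Real.sqrt ((((2*n).choose n : ℝ)/4^n)^2) := (Real.sqrt_sq h2).symm
      _ ≤ Real.sqrt (1/(2*(n:ℝ)+1)) := Real.sqrt_le_sqrt h1
  apply squeeze_zero (fun n => by positivity) hub
  have h3 : Tendsto (fun n : ℕ => (2*(n:ℝ)+1)) atTop atTop := by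
    apply tendsto_atTop_add_const_right
    exact Tendsto.const_mul_atTop (by norm_num) tendsto_natCast_atTop_atTop
  have h4 := h3.inv_tendsto_atTop
  have h5 : Tendsto (fun n : ℕ => Real.sqrt ((2*(n:ℝ)+1)⁻¹)) atTop (𝓝 (Real.sqrt 0)) :=
    h4.sqrt
  simpa [one_div] using h5

/-- For each j ≥ 1, f_j(1/4) = Σ_{l=j}^∞ C(l,j)/4^{l-1} = 1/2^{j-2} = 2^{2-j}
(the terms with l < j vanish since C(l,j) = 0 for j > l). -/
theorem catalan_triangle_genfun_at_quarter (C : ℕ → ℕ → ℝ)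
    (h11 : C 1 1 = 1)
    (h0 : ∀ i, C i 0 = 0)
    (hgt : ∀ i j, i < j → C i j = 0)
    (hrec : ∀ i j, 1 ≤ j → j ≤ i → (i, j) ≠ (1, 1) →
      C i j = C (i - 1) (j - 1) + C i (j + 1)) :
    ∀ j : ℕ, 1 ≤ j →
      HasSum (fun l : ℕ => C l j * (1 / 4 : ℝ) ^ (l - 1)) ((2 : ℝ) ^ ((2 : ℤ) - j)) := by
  -- explicit ballot-number formula
  have hform : ∀ n m d : ℕ, m + d ≤ n → d ≤ m →
      C (m+1) (m+1-d) = ((m+d).choose m : ℝ) - ((m+d).choose (m+1) : ℝ) := by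
    intro n
    induction n with
    | zero =>
      intro m d hmd hdm
      have hm : m = 0 := by omega
      have hd : d = 0 := by omega
      subst hm; subst hd
      simpa using h11
    | succ n IH =>
      intro m d hmd hdm
      rcases Nat.eq_zero_or_pos d with rfl | hd
      · rcases Nat.eq_zero_or_pos m with rfl | hm
        · simpa using h11
        · have h1 : C (m+1) (m+1) = C m m + C (m+1) (m+2) := by
            have := hrec (m+1) (m+1) (by omega) le_rfl (by simp [Prod.ext_iff]; omega)
            simpa using this
          have h2 : C (m+1) (m+2) = 0 := hgt _ _ (by omega)
          have h3 := IH (m-1) 0 (by omega) (by omega)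
          rw [show m-1+1 = m by omega] at h3
          simp only [Nat.add_zero, Nat.sub_zero] at h3
          rw [show m+1-0 = m+1 by omega, h1, h2, h3]
          simp only [Nat.add_zero]
          rw [Nat.choose_self, Nat.choose_self,
            Nat.choose_eq_zero_of_lt (by omega : m - 1 < m),
            Nat.choose_eq_zero_of_lt (by omega : m < m+1)]
          norm_num
      · have hm : 1 ≤ m := le_trans hd hdm
        have hrec' : C (m+1) (m+1-d) = C m (m-d) + C (m+1) (m+2-d) := by
          have := hrec (m+1) (m+1-d) (by omega) (by omega) (by simp [Prod.ext_iff]; omega)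
          rw [show m+1-1 = m by omega, show m+1-d-1 = m-d by omega,
            show m+1-d+1 = m+2-d by omega] at this
          exact this
        have hC3 : C (m+1) (m+2-d) = ((m+d-1).choose m : ℝ) - ((m+d-1).choose (m+1) : ℝ) := by
          have := IH m (d-1) (by omega) (by omega)
          rw [show m+1-(d-1) = m+2-d by omega, show m+(d-1) = m+d-1 by omega] at this
          exact this
        rcases eq_or_lt_of_le hdm with heq | hdm'
        · -- d = m, column 1
          obtain ⟨a, rfl⟩ : ∃ a, m = a+1 := ⟨m-1, by omega⟩
          have hC2 : C (a+1) (a+1-d) = 0 := by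
            rw [show a+1-d = 0 by omega]; exact h0 _
          rw [hrec', hC2, hC3]
          rw [show a+1+d-1 = 2*a+1 by omega, show a+1+d = 2*a+1+1 by omega]
          rw [Nat.choose_succ_succ (2*a+1) (a+1)]
          have hsym : (2*a+1).choose a = (2*a+1).choose (a+1) := by
            rw [← Nat.choose_symm (show a+1 ≤ 2*a+1 by omega),
              show 2*a+1-(a+1) = a by omega]
          rw [show (2*a+1+1).choose (a+1) = (2*a+1).choose a + (2*a+1).choose (a+1) from
            Nat.choose_succ_succ _ _]
          push_cast [hsym]
          ring
        · -- d < m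
          obtain ⟨a, rfl⟩ : ∃ a, m = a+1 := ⟨m-1, by omega⟩
          have hC2 : C (a+1) (a+1-d) = ((a+d).choose a : ℝ) - ((a+d).choose (a+1) : ℝ) := by
            have := IH a d (by omega) (by omega)
            exact this
          rw [hrec', show a+1-d = a+1-d from rfl] at *
          rw [hC2, hC3]
          rw [show a+1+d-1 = a+d by omega, show a+1+d = a+d+1 by omega]
          rw [show (a+d+1).choose (a+1) = (a+d).choose a + (a+d).choose (a+1) from
            Nat.choose_succ_succ _ _,
            show (a+d+1).choose (a+1+1) = (a+d).choose (a+1) + (a+d).choose (a+1+1) from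
            Nat.choose_succ_succ _ _]
          push_cast
          ring
  have hC1form : ∀ m : ℕ, C (m+1) 1 = ((2*m).choose m : ℝ) - ((2*m).choose (m+1) : ℝ) := by
    intro m
    have := hform (m+m) m m le_rfl le_rfl
    rw [show m+1-m = 1 by omega, show m+m = 2*m by ring] at this
    exact this
  -- base case j = 1
  have hA1 : HasSum (fun l : ℕ => C l 1 * (1/4:ℝ)^(l-1)) 2 := by
    have hnn : ∀ l : ℕ, 0 ≤ C l 1 * (1/4:ℝ)^(l-1) := by
      intro l
      cases l with
      | zero => simp [hgt 0 1 one_pos]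
      | succ m =>
        apply mul_nonneg _ (by positivity)
        rw [hC1form m]
        have h := Nat.choose_le_middle (m+1) (2*m)
        rw [show 2*m/2 = m by omega] at h
        have : ((2*m).choose (m+1) : ℝ) ≤ ((2*m).choose m : ℝ) := by exact_mod_cast h
        linarith
    rw [hasSum_iff_tendsto_nat_of_nonneg hnn]
    have key : ∀ n : ℕ, ∑ l ∈ range (n+1), C l 1 * (1/4:ℝ)^(l-1)
        = 2 - 2 * ((2*n).choose n : ℝ) / 4^n := by
      intro n
      induction n with
      | zero => simp [hgt 0 1 one_pos]
      | succ n ih =>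
        rw [Finset.sum_range_succ, ih, hC1form n]
        have hq : (2*(n+1)).choose (n+1) = 2 * ((2*n+1).choose (n+1)) := by
          have h1 : (2*(n+1)).choose (n+1) = (2*n+1).choose n + (2*n+1).choose (n+1) := by
            rw [show 2*(n+1) = (2*n+1)+1 by ring]
            exact Nat.choose_succ_succ _ _
          have h2 : (2*n+1).choose n = (2*n+1).choose (n+1) := by
            rw [← Nat.choose_symm (show n+1 ≤ 2*n+1 by omega),
              show 2*n+1-(n+1) = n by omega]
          omega
        have hp : (2*n+1).choose (n+1) = (2*n).choose n + (2*n).choose (n+1) :=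
          Nat.choose_succ_succ _ _
        rw [show n+1-1 = n by omega]
        rw [hq]
        rw [one_div, inv_pow]
        push_cast [hp]
        have h4 : (4:ℝ)^n ≠ 0 := by positivity
        field_simp
        ring
    have htail : Tendsto (fun n : ℕ => 2 - 2 * ((2*n).choose n : ℝ) / 4^n) atTop (𝓝 2) := by
      have h1 := cb_tendsto.const_mul (2:ℝ)
      have h2 : Tendsto (fun n : ℕ => (2:ℝ) - 2 * (((2*n).choose n : ℝ)/4^n)) atTop
          (𝓝 (2 - 2*0)) := Tendsto.sub tendsto_const_nhds h1
      simpa [mul_div_assoc] using h2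
    have h5 : Tendsto (fun n : ℕ => ∑ l ∈ range (n+1), C l 1 * (1/4:ℝ)^(l-1)) atTop (𝓝 2) := by
      simp only [key]
      exact htail
    exact (tendsto_add_atTop_iff_nat 1).1 h5
  -- base case j = 2
  have hA2 : HasSum (fun l : ℕ => C l 2 * (1/4:ℝ)^(l-1)) 1 := by
    have h := hA1.update 1 0
    have heq : (fun l : ℕ => C l 2 * (1/4:ℝ)^(l-1))
        = Function.update (fun l : ℕ => C l 1 * (1/4:ℝ)^(l-1)) 1 0 := by
      funext l
      rcases eq_or_ne l 1 with rfl | hl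
      · simp [hgt 1 2 (by norm_num)]
      · rw [Function.update_of_ne hl]
        rcases Nat.lt_or_ge l 2 with h2 | h2
        · have hl0 : l = 0 := by omega
          subst hl0
          rw [hgt 0 1 (by norm_num), hgt 0 2 (by norm_num)]
        · have hr := hrec l 1 le_rfl (by omega) (by simp [Prod.ext_iff]; omega)
          rw [hr, h0]
          ring_nf
    rw [heq]
    convert h using 1
    · rfl
    rw [h11]
    norm_num
  -- shift lemma
  have hshift : ∀ (k : ℕ) (s : ℝ), 1 ≤ k →
      HasSum (fun l : ℕ => C l k * (1/4:ℝ)^(l-1)) s →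
      HasSum (fun l : ℕ => C (l-1) k * (1/4:ℝ)^(l-1)) (s * (1/4)) := by
    intro k s hk hs
    have h0k : C 0 k = 0 := hgt 0 k hk
    have h1 : HasSum (fun n : ℕ => C n k * (1/4:ℝ)^(n-1) * (1/4)) (s * (1/4)) :=
      hs.mul_right _
    have h2 : (fun n : ℕ => C (n+1-1) k * (1/4:ℝ)^(n+1-1))
        = fun n : ℕ => C n k * (1/4:ℝ)^(n-1) * (1/4) := by
      funext n
      cases n with
      | zero => simp [h0k]
      | succ m =>
        rw [show m+1+1-1 = m+1 by omega, show m+1-1 = m by omega, pow_succ]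
        ring
    have h3 : HasSum (fun n : ℕ => C (n+1-1) k * (1/4:ℝ)^(n+1-1)) (s * (1/4)) := by
      rw [h2]; exact h1
    have h4 := (hasSum_nat_add_iff (f := fun l : ℕ => C (l-1) k * (1/4:ℝ)^(l-1)) 1).mp h3
    simpa [h0k] using h4
  -- the column recurrence identity
  have hid : ∀ m l : ℕ, C l (m+3) = C l (m+2) - C (l-1) (m+1) := by
    intro m l
    rcases Nat.lt_or_ge l (m+2) with hl | hl
    · rw [hgt l (m+3) (by omega), hgt l (m+2) hl, hgt (l-1) (m+1) (by omega)]
      ring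
    · have hr := hrec l (m+2) (by omega) hl (by simp)
      rw [show m+2-1 = m+1 by omega] at hr
      linarith
  -- main induction
  have main : ∀ m : ℕ, HasSum (fun l : ℕ => C l (m+1) * (1/4:ℝ)^(l-1))
      ((2:ℝ)^((2:ℤ) - ((m+1 : ℕ) : ℤ))) := by
    intro m
    induction m using Nat.strong_induction_on with
    | _ m IH =>
      match m with
      | 0 => simpa using hA1
      | 1 => simpa using hA2
      | (k+2) =>
        have h1 := IH (k+1) (by omega)
        have h2 := IH k (by omega)
        have h3 := hshift (k+1) _ (by omega) h2
        have h4 := h1.sub h3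
        have h5 : (fun l : ℕ => C l (k+2+1) * (1/4:ℝ)^(l-1))
            = fun l : ℕ => C l (k+1+1) * (1/4:ℝ)^(l-1) - C (l-1) (k+1) * (1/4:ℝ)^(l-1) := by
          funext l
          rw [show k+2+1 = k+3 by ring, hid k l]
          ring
        rw [h5]
        convert h4 using 1
        · rfl
        have h2ne : (2:ℝ) ≠ 0 := two_ne_zero
        push_cast
        rw [show (2:ℤ) - ((k:ℤ)+2+1) = -(k:ℤ) + -1 by ring,
          show (2:ℤ) - ((k:ℤ)+1+1) = -(k:ℤ) by ring,
          show (2:ℤ) - ((k:ℤ)+1) = -(k:ℤ) + 1 by ring,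
          zpow_add₀ h2ne, zpow_add₀ h2ne]
        norm_num
        ring
  intro j hj
  obtain ⟨m, rfl⟩ := Nat.exists_eq_add_of_le hj
  have := main m
  rw [show 1+m = m+1 by omega]
  exact this
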